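/- Let V be an affine subspace of F_2^n of dimension k, and let B_d = {x ∈ F_2^n : |x|_H ≤ d} be the Hamming ball of radius d. Then |V ∩ B_d| ≤ ∑_{a=0}^{d} binom(k, a). -/

import Mathlib

open Finset

lemma zmod2_ne_zero {a : ZMod 2} (h : a ≠ 0) : a = 1 := by revert h; revert a; decide

lemma sep_set (n k : ℕ) (W : Submodule (ZMod 2) (Fin n → ZMod 2))
    (hW : Module.finrank (ZMod 2) W = k) :
    ∃ S : Finset (Fin n), S.card ≤ k ∧
      ∀ w ∈ W, (∀ i ∈ S, w i = 0) → w = 0 := by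
  classical
  set P : Finset (Fin n) → Prop := fun S => ∀ w ∈ W, (∀ i ∈ S, w i = 0) → w = 0 with hP
  have hPuniv : P Finset.univ := by
    intro w _ h
    funext i; exact h i (mem_univ i)
  obtain ⟨S, hS, hmin⟩ := Finset.exists_min_image (Finset.univ.filter P) Finset.card
    ⟨Finset.univ, Finset.mem_filter.mpr ⟨mem_univ _, hPuniv⟩⟩
  rw [mem_filter] at hS
  refine ⟨S, ?_, hS.2⟩
  have key : ∀ i ∈ S, ∃ w, w ∈ W ∧ (∀ j ∈ S.erase i, w j = 0) ∧ w ≠ 0 := by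
    intro i hi
    by_contra h
    push_neg at h
    have hPe : P (S.erase i) := h
    have h1 := hmin (S.erase i) (Finset.mem_filter.mpr ⟨mem_univ _, hPe⟩)
    have h2 := Finset.card_erase_lt_of_mem hi
    omega
  choose w hwW hwz hwne using key
  set g : ↥S → ↥W := fun i => ⟨w i.1 i.2, hwW i.1 i.2⟩ with hg
  have hli : LinearIndependent (ZMod 2) g := by
    set r : ↥W →ₗ[ZMod 2] (↥S → ZMod 2) :=
      { toFun := fun u => fun j => (u : Fin n → ZMod 2) j.1
        map_add' := by intros; rfl
        map_smul' := by intros; rfl } with hr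
    have hcomp : r ∘ g = fun i : ↥S => Pi.single i (1 : ZMod 2) := by
      funext i j
      simp only [hr, hg, Function.comp_apply, LinearMap.coe_mk, AddHom.coe_mk]
      by_cases hji : j = i
      · subst hji
        rw [Pi.single_eq_same]
        apply zmod2_ne_zero
        intro h0
        apply hwne j.1 j.2
        apply hS.2 _ (hwW j.1 j.2)
        intro t ht
        by_cases ht' : t = j.1
        · rw [ht']; exact h0
        · exact hwz j.1 j.2 t (Finset.mem_erase.mpr ⟨ht', ht⟩)
      · rw [Pi.single_eq_of_ne hji]
        exact hwz i.1 i.2 j.1 (Finset.mem_erase.mpr ⟨fun hh => hji (Subtype.ext hh), j.2⟩)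
    have hind : LinearIndependent (ZMod 2) (r ∘ g) := by
      rw [hcomp]
      convert (Pi.basisFun (ZMod 2) ↥S).linearIndependent using 1
      funext i
      simp [Pi.basisFun_apply]
    exact hind.of_comp r
  have := hli.fintype_card_le_finrank
  rwa [hW, Fintype.card_coe] at this

/-- An affine subspace of dimension `k` of `F_2^n` meets the Hamming ball of radius `d`
in at most `∑_{a=0}^d C(k,a)` points. -/
theorem stmt2 (n k d : ℕ) (W : Submodule (ZMod 2) (Fin n → ZMod 2))
    (hW : Module.finrank (ZMod 2) W = k) (v : Fin n → ZMod 2) :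
    Nat.card {x : Fin n → ZMod 2 | (∃ w ∈ W, x = v + w) ∧ hammingNorm x ≤ d} ≤
      ∑ a ∈ Finset.range (d + 1), Nat.choose k a := by
  classical
  obtain ⟨S, hScard, hSsep⟩ := sep_set n k W hW
  set F : Finset (Finset (Fin n)) := S.powerset.filter (fun T => T.card ≤ d) with hF
  set f : {x : Fin n → ZMod 2 | (∃ w ∈ W, x = v + w) ∧ hammingNorm x ≤ d} →
      {T : Finset (Fin n) // T ∈ F} := fun x =>
    ⟨S.filter (fun i => x.1 i ≠ 0), by
      rw [hF, Finset.mem_filter]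
      refine ⟨Finset.mem_powerset.mpr (Finset.filter_subset _ _), ?_⟩
      calc (S.filter (fun i => x.1 i ≠ 0)).card
          ≤ ({i | x.1 i ≠ 0} : Finset (Fin n)).card :=
            Finset.card_le_card (fun i hi => by
              simp only [Finset.mem_filter] at hi ⊢
              exact ⟨Finset.mem_univ i, hi.2⟩)
        _ ≤ d := x.2.2⟩ with hf
  have hinj : Function.Injective f := by
    rintro ⟨x1, ⟨⟨w1, hw1, hx1⟩, _⟩⟩ ⟨x2, ⟨⟨w2, hw2, hx2⟩, _⟩⟩ h
    simp only [hf, Subtype.mk.injEq] at h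
    ext1
    have heq : ∀ i ∈ S, x1 i = x2 i := by
      intro i hi
      have : (i ∈ S.filter (fun i => x1 i ≠ 0)) ↔ (i ∈ S.filter (fun i => x2 i ≠ 0)) := by
        rw [h]
      simp only [Finset.mem_filter, hi, true_and] at this
      by_cases h1 : x1 i = 0
      · by_cases h2 : x2 i = 0
        · rw [h1, h2]
        · exact absurd (this.mpr h2) (by simp [h1])
      · rw [zmod2_ne_zero h1, zmod2_ne_zero (this.mp h1)]
    have hmem : x1 - x2 ∈ W := by
      rw [hx1, hx2, add_sub_add_left_eq_sub]
      exact sub_mem hw1 hw2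
    have := hSsep _ hmem (fun i hi => by
      simp only [Pi.sub_apply, sub_eq_zero]; exact heq i hi)
    have := sub_eq_zero.mp (by rw [← this])
    exact this
  calc Nat.card {x : Fin n → ZMod 2 | (∃ w ∈ W, x = v + w) ∧ hammingNorm x ≤ d}
      ≤ Nat.card {T : Finset (Fin n) // T ∈ F} := Nat.card_le_card_of_injective f hinj
    _ = F.card := by rw [Nat.card_eq_fintype_card, Fintype.card_coe]
    _ ≤ ∑ a ∈ Finset.range (d + 1), Nat.choose S.card a := by
        have hsub : F ⊆ (Finset.range (d + 1)).biUnion (fun a => Finset.powersetCard a S) := by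
          intro T hT
          rw [hF, Finset.mem_filter, Finset.mem_powerset] at hT
          exact Finset.mem_biUnion.mpr ⟨T.card, Finset.mem_range.mpr (by omega),
            Finset.mem_powersetCard.mpr ⟨hT.1, rfl⟩⟩
        calc F.card ≤ _ := Finset.card_le_card hsub
          _ ≤ _ := Finset.card_biUnion_le
          _ = _ := by simp [Finset.card_powersetCard]
    _ ≤ ∑ a ∈ Finset.range (d + 1), Nat.choose k a :=
        Finset.sum_le_sum (fun a _ => Nat.choose_le_choose a hScard)
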